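/- Let M ∈ ℕ and let P, Q be complex polynomials of degree at most M. Then lim_{N→∞} ⟨P^N, Q^N⟩_N = ⟨P, Q⟩_{𝔽²}; in particular lim_{N→∞} ‖P^N‖_N = ‖P‖_{𝔽²}. -/

import Mathlib

open MeasureTheory Complex
open scoped ComplexOrder

noncomputable section

/-- The probability measure `dm(z) = dA(z)/(π(1+|z|²)²)` on `ℂ`. -/
def mC : Measure ℂ :=
  volume.withDensity fun z => ENNReal.ofReal (1 / (Real.pi * (1 + ‖z‖ ^ 2) ^ 2))

/-- The weighted density `u(z) = |f(z)|²/(1+|z|²)^N`. -/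
def uN (N : ℕ) (f : ℂ → ℂ) (z : ℂ) : ℝ :=
  ‖(f z)‖ ^ 2 / (1 + ‖z‖ ^ 2) ^ N

/-- The squared norm `‖f‖_N² = (N+1)∫ |f(z)|²/(1+|z|²)^N dm(z)` on `𝒫_N`. -/
def normNsq (N : ℕ) (f : ℂ → ℂ) : ℝ :=
  (N + 1) * ∫ z, uN N f z ∂mC

/-- The Hermitian product `⟨f,g⟩_N = (N+1)∫ f(z)·conj(g(z))/(1+|z|²)^N dm(z)`. -/
def innerN (N : ℕ) (f g : ℂ → ℂ) : ℂ :=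
  (N + 1) * ∫ z, f z * (starRingEnd ℂ) (g z) / (((1 + ‖z‖ ^ 2 : ℝ) : ℂ)) ^ N ∂mC

/-- The normalized reproducing kernel `κ_{N,a}(z) = (1+z·conj a)^N/(1+|a|²)^{N/2}`. -/
def kerN (N : ℕ) (a z : ℂ) : ℂ :=
  (1 + z * (starRingEnd ℂ) a) ^ N / (((1 + ‖a‖ ^ 2) ^ ((N : ℝ) / 2) : ℝ) : ℂ)

/-- `D_N(f) = min{‖f − e^{iθ}κ_{N,a}‖_N : a ∈ ℂ, θ ∈ [0,2π]}`. -/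
def DN (N : ℕ) (f : ℂ → ℂ) : ℝ :=
  sInf { d | ∃ a : ℂ, ∃ θ ∈ Set.Icc (0 : ℝ) (2 * Real.pi),
    d = Real.sqrt (normNsq N fun z => f z - Complex.exp (θ * Complex.I) * kerN N a z) }

/-- The concentration `C_{N,Ω}(f) = (N+1)∫_Ω |f(z)|²/(1+|z|²)^N dm(z) / ‖f‖_N²`. -/
def concN (N : ℕ) (Ω : Set ℂ) (f : ℂ → ℂ) : ℝ :=
  ((N + 1) * ∫ z in Ω, uN N f z ∂mC) / normNsq N f

/-- The deficit `δ_N(f,Ω) = 1 − C_{N,Ω}(f)/C_{N,Ω*}(1)`, where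
`C_{N,Ω*}(1) = 1 − (1−m(Ω))^{N+1}`. -/
def deltaN (N : ℕ) (Ω : Set ℂ) (f : ℂ → ℂ) : ℝ :=
  1 - concN N Ω f / (1 - (1 - (mC Ω).toReal) ^ (N + 1))

/-- The generalized Wehrl entropy `S_{N,Φ}(f) = −(N+1)∫ Φ(u(z)) dm(z)`. -/
def entN (N : ℕ) (Φ : ℝ → ℝ) (f : ℂ → ℂ) : ℝ :=
  -((N + 1) * ∫ z, Φ (uN N f z) ∂mC)

/-- The Wehrl entropy `S_N(f) = −(N+1)∫ u(z)·log u(z) dm(z)`. -/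
def wehrlN (N : ℕ) (f : ℂ → ℂ) : ℝ :=
  -((N + 1) * ∫ z, uN N f z * Real.log (uN N f z) ∂mC)

/-- `T = sup_{z∈ℂ} u(z)`. -/
def TN (N : ℕ) (f : ℂ → ℂ) : ℝ := ⨆ z : ℂ, uN N f z

/-- The distribution function `μ(t) = m({z : u(z) > t})`. -/
def muN (N : ℕ) (f : ℂ → ℂ) (t : ℝ) : ℝ := (mC { z | uN N f z > t }).toReal

/-- `μ₀(t) = 1 − t^{1/N}`. -/
def mu0 (N : ℕ) (t : ℝ) : ℝ := 1 - t ^ ((1 : ℝ) / N)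

/-- The chordal distance on `ℂ`. -/
def chordalDist (z w : ℂ) : ℝ :=
  ‖(z - w)‖ /
    (Real.sqrt Real.pi * Real.sqrt ((1 + ‖z‖ ^ 2) * (1 + ‖w‖ ^ 2)))

/-- The chordal disc `𝒟_r(z)`. -/
def chordalDisc (z : ℂ) (r : ℝ) : Set ℂ := { w | chordalDist z w ≤ r }

/-- The Fraenkel asymmetry `𝒜_m(Ω)` with respect to the measure `m` and chordal discs. -/
def asymM (Ω : Set ℂ) : ℝ :=
  sInf { A | ∃ z : ℂ, ∃ r : ℝ, mC (chordalDisc z r) = mC Ω ∧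
    A = ((mC (Ω \ chordalDisc z r)).toReal + (mC (chordalDisc z r \ Ω)).toReal) /
      (mC Ω).toReal }

/-- The squared Fock norm `‖f‖_{𝔽²}²`. -/
def normFsq (f : ℂ → ℂ) : ℝ :=
  ∫ z : ℂ, ‖(f z)‖ ^ 2 * Real.exp (-Real.pi * ‖z‖ ^ 2)

/-- The Fock Hermitian product. -/
def innerF (f g : ℂ → ℂ) : ℂ :=
  ∫ z : ℂ, f z * (starRingEnd ℂ) (g z) * ((Real.exp (-Real.pi * ‖z‖ ^ 2) : ℝ) : ℂ)

/-- The normalized Fock reproducing kernel `κ_a(z) = e^{−π|a|²/2}e^{π·conj(a)·z}`. -/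
def kerF (a z : ℂ) : ℂ :=
  ((Real.exp (-Real.pi * ‖a‖ ^ 2 / 2) : ℝ) : ℂ) *
    Complex.exp ((Real.pi : ℂ) * (starRingEnd ℂ) a * z)

/-- `D(f) = min{‖f − e^{iθ}κ_a‖_{𝔽²} : a ∈ ℂ, θ ∈ [0,2π]}`. -/
def DF (f : ℂ → ℂ) : ℝ :=
  sInf { d | ∃ a : ℂ, ∃ θ ∈ Set.Icc (0 : ℝ) (2 * Real.pi),
    d = Real.sqrt (normFsq fun z => f z - Complex.exp (θ * Complex.I) * kerF a z) }

/-- The Fock concentration `C_Ω(f)`. -/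
def concF (Ω : Set ℂ) (f : ℂ → ℂ) : ℝ :=
  (∫ z in Ω, ‖(f z)‖ ^ 2 * Real.exp (-Real.pi * ‖z‖ ^ 2)) / normFsq f

/-- The Fock deficit `δ(f,Ω) = 1 − (∫_Ω |f|²e^{−π|z|²})/(1 − e^{−|Ω|})`. -/
def deltaF (Ω : Set ℂ) (f : ℂ → ℂ) : ℝ :=
  1 - (∫ z in Ω, ‖(f z)‖ ^ 2 * Real.exp (-Real.pi * ‖z‖ ^ 2)) /
      (1 - Real.exp (-(volume Ω).toReal))

/-- The Fock generalized Wehrl entropy `S_Φ(f)`. -/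
def entF (Φ : ℝ → ℝ) (f : ℂ → ℂ) : ℝ :=
  -∫ z : ℂ, Φ (‖(f z)‖ ^ 2 * Real.exp (-Real.pi * ‖z‖ ^ 2))

/-- The Euclidean Fraenkel asymmetry `𝒜(Ω)`. -/
def asymEuc (Ω : Set ℂ) : ℝ :=
  sInf { A | ∃ z : ℂ, ∃ r : ℝ, volume (Metric.closedBall z r) = volume Ω ∧
    A = 2 * (volume (Ω \ Metric.closedBall z r)).toReal / (volume Ω).toReal }

/-- The rescaled function `f^N(z) = f(√(N/π)·z)`. -/
def rescaleF (N : ℕ) (f : ℂ → ℂ) : ℂ → ℂ :=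
  fun z => f (((Real.sqrt (N / Real.pi) : ℝ) : ℂ) * z)

/-- The rescaled set `Ω^N = √(π/N)·Ω`. -/
def rescaleSet (N : ℕ) (Ω : Set ℂ) : Set ℂ :=
  (fun z => ((Real.sqrt (Real.pi / N) : ℝ) : ℂ) * z) '' Ω

open scoped NNReal ENNReal
open Filter

lemma limit_inv_pow {t : ℝ} (ht : 0 ≤ t) :
    Tendsto (fun N : ℕ => ((1 + t / N) ^ (N + 2))⁻¹) atTop (nhds (Real.exp (-t))) := by
  have h0 : Tendsto (fun N : ℕ => t / N) atTop (nhds 0) :=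
    tendsto_const_div_atTop_nhds_zero_nat t
  have h2 : Tendsto (fun N : ℕ => (1 + t / N) ^ 2) atTop (nhds 1) := by
    have hc : Continuous fun x : ℝ => (1 + x) ^ 2 :=
      (continuous_const.add continuous_id).pow 2
    have := (hc.tendsto (0 : ℝ)).comp h0
    simpa [Function.comp_def] using this
  have h1 : Tendsto (fun N : ℕ => (1 + t / N) ^ (N + 2)) atTop (nhds (Real.exp t)) := by
    have := (Real.tendsto_one_add_div_pow_exp t).mul h2
    rw [mul_one] at this
    refine this.congr fun N => ?_
    rw [← pow_add]
  have := h1.inv₀ (Real.exp_ne_zero t)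
  rwa [← Real.exp_neg] at this

lemma norm_F_eq (a b : ℂ) {x : ℝ} (hx : 0 ≤ x) :
    ‖a * (starRingEnd ℂ) b * ((x : ℝ) : ℂ)‖ = ‖a‖ * ‖b‖ * x := by
  rw [norm_mul, norm_mul, Complex.norm_real, Real.norm_eq_abs, _root_.abs_of_nonneg hx,
    Complex.norm_conj]

lemma cont_invpow (a : ℝ) (ha : 0 ≤ a) (m : ℕ) :
    Continuous fun w : ℂ => ((1 + Real.pi * ‖w‖ ^ 2 / a) ^ m)⁻¹ := by
  have hb : Continuous fun w : ℂ => 1 + Real.pi * ‖w‖ ^ 2 / a :=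
    continuous_const.add ((continuous_const.mul (continuous_norm.pow 2)).div_const a)
  refine (hb.pow m).inv₀ fun w => ?_
  have h1 : (0:ℝ) < 1 + Real.pi * ‖w‖ ^ 2 / a :=
    add_pos_of_pos_of_nonneg one_pos (div_nonneg (by positivity) ha)
  exact pow_ne_zero _ h1.ne'

lemma poly_bound (M : ℕ) (P : Polynomial ℂ) (hP : P.natDegree ≤ M) :
    ∃ A : ℝ, 0 ≤ A ∧ ∀ w : ℂ, ‖P.eval w‖ ≤ A * (1 + ‖w‖) ^ M := by
  refine ⟨∑ i ∈ Finset.range (M + 1), ‖P.coeff i‖, by positivity, fun w => ?_⟩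
  rw [Polynomial.eval_eq_sum_range' (Nat.lt_succ_of_le hP)]
  calc ‖∑ i ∈ Finset.range (M + 1), P.coeff i * w ^ i‖
      ≤ ∑ i ∈ Finset.range (M + 1), ‖P.coeff i * w ^ i‖ :=
        norm_sum_le _ _
    _ ≤ ∑ i ∈ Finset.range (M + 1), ‖P.coeff i‖ * (1 + ‖w‖) ^ M := by
        refine Finset.sum_le_sum fun i hi => ?_
        rw [norm_mul, norm_pow]
        refine mul_le_mul_of_nonneg_left ?_ (norm_nonneg _)
        calc ‖w‖ ^ i ≤ (1 + ‖w‖) ^ i :=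
              pow_le_pow_left₀ (norm_nonneg _) (by linarith [norm_nonneg w]) i
          _ ≤ (1 + ‖w‖) ^ M :=
              pow_le_pow_right₀ (by linarith [norm_nonneg w])
                (by simpa using Nat.lt_succ_iff.1 (Finset.mem_range.1 hi))
    _ = (∑ i ∈ Finset.range (M + 1), ‖P.coeff i‖) * (1 + ‖w‖) ^ M := by
        rw [Finset.sum_mul]


lemma key_ineq (k N : ℕ) (hk : 1 ≤ k) (hN : 2 * k ≤ N) {x : ℝ} (hx : 0 ≤ x) :
    (1 + x / (2 * k)) ^ k ≤ (1 + x / N) ^ (N + 2) := by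
  have hNpos : (0 : ℝ) < N := by exact_mod_cast Nat.pos_of_ne_zero (by omega)
  have hkR : (0:ℝ) < k := by exact_mod_cast hk
  obtain ⟨q, r, hrk, hNeq⟩ : ∃ q r : ℕ, r < k ∧ N = k * q + r :=
    ⟨N / k, N % k, Nat.mod_lt _ hk, (Nat.div_add_mod N k).symm⟩
  have hq1 : 1 ≤ q := by
    rcases Nat.eq_zero_or_pos q with rfl | h
    · simp at hNeq; omega
    · exact h
  have hqR : (1:ℝ) ≤ q := by exact_mod_cast hq1
  have hNcast : (N : ℝ) = k * q + r := by exact_mod_cast hNeq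
  have hrR : (r : ℝ) < k := by exact_mod_cast hrk
  have hN2kq : (N : ℝ) ≤ 2 * (k * q) := by nlinarith
  have h1 : 1 + x / (2 * k) ≤ 1 + (q : ℝ) * (x / N) := by
    rw [add_le_add_iff_left, div_le_iff₀ (by positivity), mul_comm (q:ℝ) (x / N),
      div_mul_eq_mul_div, div_mul_eq_mul_div, le_div_iff₀ hNpos]
    nlinarith
  have h2 : 1 + (q : ℝ) * (x / N) ≤ (1 + x / N) ^ q := by
    have : (0:ℝ) ≤ x / N := by positivity
    exact one_add_mul_le_pow (by linarith) q
  have hqkN : q * k ≤ N + 2 := by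
    calc q * k = k * q := Nat.mul_comm _ _
      _ ≤ N := by omega
      _ ≤ N + 2 := by omega
  calc (1 + x / (2 * k)) ^ k ≤ (1 + (q : ℝ) * (x / N)) ^ k := by
        refine pow_le_pow_left₀ (by positivity) h1 k
    _ ≤ ((1 + x / N) ^ q) ^ k := by
        refine pow_le_pow_left₀ (by positivity) h2 k
    _ = (1 + x / N) ^ (q * k) := by rw [← pow_mul]
    _ ≤ (1 + x / N) ^ (N + 2) := by
        refine pow_le_pow_right₀ (le_add_of_nonneg_right (by positivity)) hqkN



lemma J_tendsto (M : ℕ) (P Q : Polynomial ℂ) (hP : P.natDegree ≤ M) (hQ : Q.natDegree ≤ M) :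
    Tendsto (fun N : ℕ => ∫ w : ℂ, P.eval w * (starRingEnd ℂ) (Q.eval w) *
        (((((1 + Real.pi * ‖w‖ ^ 2 / N) ^ (N + 2))⁻¹ : ℝ)) : ℂ))
      atTop
      (nhds (∫ w : ℂ, P.eval w * (starRingEnd ℂ) (Q.eval w) *
        ((Real.exp (-(Real.pi * ‖w‖ ^ 2)) : ℝ) : ℂ))) := by
  have hπ := Real.pi_pos
  set k : ℕ := M + 2 with hk
  obtain ⟨A, hA0, hA⟩ := poly_bound M P hP
  obtain ⟨B, hB0, hB⟩ := poly_bound M Q hQ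
  set c : ℝ := min 1 (Real.pi / (2 * k)) with hc
  have hc0 : 0 < c := lt_min one_pos (by positivity)
  rw [← tendsto_add_atTop_iff_nat (2 * k)]
  have hFcont : ∀ N : ℕ, Continuous (fun w : ℂ => P.eval w * (starRingEnd ℂ) (Q.eval w) *
      (((((1 + Real.pi * ‖w‖ ^ 2 / N) ^ (N + 2))⁻¹ : ℝ)) : ℂ)) := fun N =>
    (P.continuous.mul (Complex.continuous_conj.comp Q.continuous)).mul
      (Complex.continuous_ofReal.comp (cont_invpow N (Nat.cast_nonneg N) (N + 2)))
  refine tendsto_integral_of_dominated_convergence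
    (fun w => ‖P.eval w‖ * ‖Q.eval w‖ *
      ((1 + Real.pi * ‖w‖ ^ 2 / (2 * k)) ^ k)⁻¹)
    (fun n => ((hFcont (n + 2 * k)).aestronglyMeasurable)) ?_ ?_ ?_
  · -- integrability of the bound
    have h4 : ((Module.finrank ℝ ℂ : ℝ)) < 4 := by
      rw [Complex.finrank_real_complex]; norm_num
    have hbase : Integrable (fun w : ℂ => A * B * (2 / c) ^ k * (1 + ‖w‖) ^ (-(4:ℝ))) :=
      (integrable_one_add_norm h4).const_mul _
    refine hbase.mono' ?_ (Filter.Eventually.of_forall fun w => ?_)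
    · exact (((continuous_norm.comp P.continuous).mul
        (continuous_norm.comp Q.continuous)).mul
        (cont_invpow (2 * k) (by positivity) k)).aestronglyMeasurable
    · set t : ℝ := ‖w‖ with htdef
      have ht0 : 0 ≤ t := norm_nonneg w
      set u : ℝ := 1 + t with hu
      have hu1 : 1 ≤ u := by rw [hu]; linarith
      have hu0 : 0 < u := by linarith
      have hnt : ‖w‖ = t := rfl
      have hnorm : ‖‖P.eval w‖ * ‖Q.eval w‖ *
          ((1 + Real.pi * t ^ 2 / (2 * k)) ^ k)⁻¹‖
          = ‖P.eval w‖ * ‖Q.eval w‖ *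
            ((1 + Real.pi * t ^ 2 / (2 * k)) ^ k)⁻¹ := by
        rw [Real.norm_eq_abs, _root_.abs_of_nonneg (by positivity)]
      rw [hnorm]
      have hc1 : c ≤ 1 := min_le_left _ _
      have hc2 : c ≤ Real.pi / (2 * k) := min_le_right _ _
      have husq : u ^ 2 ≤ 2 * (1 + t ^ 2) := by
        rw [hu]; nlinarith [sq_nonneg (1 - t)]
      have h3 : (c / 2) * u ^ 2 ≤ 1 + Real.pi * t ^ 2 / (2 * k) := by
        have hct : c * t ^ 2 ≤ (Real.pi / (2 * k)) * t ^ 2 :=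
          mul_le_mul_of_nonneg_right hc2 (sq_nonneg t)
        have h3a : c / 2 * u ^ 2 ≤ c / 2 * (2 * (1 + t ^ 2)) :=
          mul_le_mul_of_nonneg_left husq (by positivity)
        have h3b : c / 2 * (2 * (1 + t ^ 2)) = c + c * t ^ 2 := by ring
        have hct2 : (Real.pi / (2 * k)) * t ^ 2 = Real.pi * t ^ 2 / (2 * k) := by ring
        linarith [hct, h3a, h3b, hc1]
      have h4' : ((c / 2) * u ^ 2) ^ k ≤ (1 + Real.pi * t ^ 2 / (2 * k)) ^ k :=
        pow_le_pow_left₀ (by positivity) h3 k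
      have h5 : ((1 + Real.pi * t ^ 2 / (2 * k)) ^ k)⁻¹ ≤ (((c / 2) * u ^ 2) ^ k)⁻¹ :=
        inv_anti₀ (by positivity) h4'
      have h6 : ‖P.eval w‖ * ‖Q.eval w‖ *
          ((1 + Real.pi * t ^ 2 / (2 * k)) ^ k)⁻¹
          ≤ (A * u ^ M) * (B * u ^ M) * (((c / 2) * u ^ 2) ^ k)⁻¹ :=
        mul_le_mul (mul_le_mul (hA w) (hB w) (norm_nonneg _)
            (mul_nonneg hA0 (by positivity)))
          h5 (by positivity)
          (mul_nonneg (mul_nonneg hA0 (by positivity)) (mul_nonneg hB0 (by positivity)))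
      refine h6.trans (le_of_eq ?_)
      have hrpow : u ^ (-(4:ℝ)) = (u ^ (4:ℕ))⁻¹ := by
        rw [← Real.rpow_natCast u 4, ← Real.rpow_neg hu0.le]
        norm_num
      rw [hrpow]
      have hup : u ^ (2 * k) = u ^ (2 * M) * u ^ (4:ℕ) := by
        have h2k : 2 * k = 2 * M + 4 := by omega
        rw [h2k, pow_add]
      rw [mul_pow, ← pow_mul, hup]
      have hcne : ((c / 2) ^ k : ℝ) ≠ 0 := by positivity
      have hune : (u : ℝ) ≠ 0 := hu0.ne'
      have hcne' : c ≠ 0 := hc0.ne'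
      field_simp
      have e1 : c ^ k * c⁻¹ ^ k = 1 := by rw [← mul_pow, mul_inv_cancel₀ hcne', one_pow]
      have e2 : (1 / 2 : ℝ) ^ k * 2 ^ k = 1 := by rw [← mul_pow]; norm_num
      linear_combination (-(A * u ^ (M * 2) * B) * (1 / 2 : ℝ) ^ k * 2 ^ k) * e1 +
        (-(A * u ^ (M * 2) * B)) * e2
  · -- pointwise bound
    intro n
    refine Filter.Eventually.of_forall fun w => ?_
    have hx : (0:ℝ) ≤ ((1 + Real.pi * ‖w‖ ^ 2 / ((n + 2 * k : ℕ) : ℝ)) ^ (n + 2 * k + 2))⁻¹ := by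
      have : (0:ℝ) < 1 + Real.pi * ‖w‖ ^ 2 / (n + 2 * k) :=
        add_pos_of_pos_of_nonneg one_pos (div_nonneg (by positivity) (by positivity))
      positivity
    rw [norm_F_eq _ _ hx]
    have ht0 : (0:ℝ) ≤ Real.pi * ‖w‖ ^ 2 := by positivity
    have hki := key_ineq k (n + 2 * k) (by omega) (by omega) ht0
    have hden : (0:ℝ) < (1 + Real.pi * ‖w‖ ^ 2 / (2 * k)) ^ k := by
      have : (0:ℝ) < 1 + Real.pi * ‖w‖ ^ 2 / (2 * k) :=
        add_pos_of_pos_of_nonneg one_pos (div_nonneg (by positivity) (by positivity))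
      positivity
    refine mul_le_mul_of_nonneg_left ?_
      (mul_nonneg (norm_nonneg _) (norm_nonneg _))
    exact inv_anti₀ hden hki
  · -- pointwise limit
    refine Filter.Eventually.of_forall fun w => ?_
    have hg : Tendsto (fun N : ℕ => ((1 + (Real.pi * ‖w‖ ^ 2) / N) ^ (N + 2))⁻¹)
        atTop (nhds (Real.exp (-(Real.pi * ‖w‖ ^ 2)))) :=
      limit_inv_pow (by positivity)
    have hg' := hg.comp (tendsto_add_atTop_nat (2 * k))
    have hofr := (Complex.continuous_ofReal.tendsto _).comp hg'
    exact Filter.Tendsto.const_mul (P.eval w * (starRingEnd ℂ) (Q.eval w)) hofr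


set_option maxHeartbeats 2000000 in
lemma innerN_eq (N : ℕ) (hN : 1 ≤ N) (p q : ℂ → ℂ) :
    innerN N (rescaleF N p) (rescaleF N q)
      = ((((N : ℝ) + 1) / N : ℝ) : ℂ) *
        ∫ w : ℂ, p w * (starRingEnd ℂ) (q w) *
          (((((1 + Real.pi * ‖w‖ ^ 2 / N) ^ (N + 2))⁻¹ : ℝ)) : ℂ) := by
  have hπ : (0:ℝ) < Real.pi := Real.pi_pos
  have hNR : (0:ℝ) < N := by exact_mod_cast Nat.pos_of_ne_zero (by omega)
  set s : ℝ := Real.sqrt (N / Real.pi) with hs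
  have hs2 : s ^ 2 = N / Real.pi := Real.sq_sqrt (by positivity)
  have hspos : 0 < s := Real.sqrt_pos.2 (by positivity)
  set G : ℂ → ℂ := fun w => p w * (starRingEnd ℂ) (q w) *
      ((((Real.pi * (1 + Real.pi * ‖w‖ ^ 2 / N) ^ (N + 2))⁻¹ : ℝ)) : ℂ) with hG
  have hdens : Measurable fun z : ℂ =>
      (1 / (Real.pi * (1 + ‖z‖ ^ 2) ^ 2)).toNNReal := by
    refine measurable_real_toNNReal.comp ?_
    exact (measurable_const.div ((measurable_const.mul
      (((continuous_norm.measurable.pow_const 2).const_add 1).pow_const 2))))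
  have halg : ∀ (a b c : ℝ) (A : ℂ), a / b = c → (a:ℂ) * (A / (b:ℂ)) = A * (c:ℂ) := by
    intro a b c A h; rw [← h]; push_cast; ring
  have key : ∀ z : ℂ,
      (((1 / (Real.pi * (1 + ‖z‖ ^ 2) ^ 2)).toNNReal : ℝ≥0)) •
        (rescaleF N p z * (starRingEnd ℂ) (rescaleF N q z) /
          (((1 + ‖z‖ ^ 2 : ℝ) : ℂ)) ^ N) = G (s • z) := by
    intro z
    have habs : ‖s • z‖ ^ 2 = s ^ 2 * ‖z‖ ^ 2 := by
      rw [Complex.real_smul, norm_mul, mul_pow, Complex.norm_real, Real.norm_eq_abs, abs_of_pos hspos]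
    have hr : (0:ℝ) < 1 + ‖z‖ ^ 2 := by positivity
    have harg : 1 + Real.pi * ‖s • z‖ ^ 2 / N = 1 + ‖z‖ ^ 2 := by
      rw [habs, hs2]; field_simp
    have hp : rescaleF N p z = p (s • z) := by
      rw [Complex.real_smul]; rfl
    have hq : rescaleF N q z = q (s • z) := by
      rw [Complex.real_smul]; rfl
    rw [NNReal.smul_def, Real.coe_toNNReal _ (by positivity), hp, hq]
    simp only [hG, harg]
    rw [← Complex.ofReal_pow]
    refine halg _ _ _ _ ?_
    have hr0 : (1 + ‖z‖ ^ 2) ≠ 0 := hr.ne'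
    have hπ0 : Real.pi ≠ 0 := hπ.ne'
    field_simp
    ring
  have hmC : mC = volume.withDensity (fun z : ℂ =>
      ((((1 / (Real.pi * (1 + ‖z‖ ^ 2) ^ 2)).toNNReal : ℝ≥0)) : ℝ≥0∞)) := rfl
  unfold innerN
  rw [hmC, integral_withDensity_eq_integral_smul hdens]
  rw [MeasureTheory.integral_congr_ae (Filter.Eventually.of_forall key)]
  rw [MeasureTheory.Measure.integral_comp_smul volume G s]
  rw [Complex.finrank_real_complex, hs2, abs_of_pos (by positivity)]
  have hG2 : G = fun w => (Real.pi⁻¹ : ℝ) • (p w * (starRingEnd ℂ) (q w) *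
      (((((1 + Real.pi * ‖w‖ ^ 2 / N) ^ (N + 2))⁻¹ : ℝ)) : ℂ)) := by
    funext w
    simp only [hG]
    rw [mul_inv, Complex.ofReal_mul, Complex.real_smul]
    ring
  rw [hG2, integral_smul, smul_smul, Complex.real_smul, ← mul_assoc]
  congr 1
  have hN0 : (N:ℝ) ≠ 0 := hNR.ne'
  have hπ0 : Real.pi ≠ 0 := hπ.ne'
  have hc : ((N:ℝ)/Real.pi)⁻¹ * Real.pi⁻¹ = ((N:ℝ))⁻¹ := by
    field_simp
  rw [hc]
  push_cast
  rw [div_eq_mul_inv]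


lemma normNsq_eq (N : ℕ) (f : ℂ → ℂ) : ((normNsq N f : ℝ) : ℂ) = innerN N f f := by
  unfold normNsq innerN
  rw [Complex.ofReal_mul]
  congr 1
  · push_cast; ring
  · calc ((∫ z, uN N f z ∂mC : ℝ) : ℂ) = ∫ z, ((uN N f z : ℝ) : ℂ) ∂mC :=
        integral_ofReal.symm
    _ = ∫ z, f z * (starRingEnd ℂ) (f z) / (((1 + ‖z‖ ^ 2 : ℝ) : ℂ)) ^ N ∂mC := by
        refine integral_congr_ae (Filter.Eventually.of_forall fun z => ?_)
        unfold uN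
        simp only [Complex.ofReal_div, Complex.ofReal_pow, Complex.sq_norm,
          ← Complex.mul_conj]

lemma normFsq_eq (f : ℂ → ℂ) : ((normFsq f : ℝ) : ℂ) = innerF f f := by
  unfold normFsq innerF
  calc ((∫ z : ℂ, ‖f z‖ ^ 2 * Real.exp (-Real.pi * ‖z‖ ^ 2) : ℝ) : ℂ)
      = ∫ z : ℂ, ((‖f z‖ ^ 2 * Real.exp (-Real.pi * ‖z‖ ^ 2) : ℝ) : ℂ) :=
        integral_ofReal.symm
    _ = ∫ z : ℂ, f z * (starRingEnd ℂ) (f z) *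
          ((Real.exp (-Real.pi * ‖z‖ ^ 2) : ℝ) : ℂ) := by
        refine integral_congr_ae (Filter.Eventually.of_forall fun z => ?_)
        simp only [Complex.ofReal_mul, Complex.sq_norm, ← Complex.mul_conj]

lemma inner_conv (M : ℕ) (P Q : Polynomial ℂ)
    (hP : P.natDegree ≤ M) (hQ : Q.natDegree ≤ M) :
    Filter.Tendsto (fun N : ℕ =>
        innerN N (rescaleF N fun z => P.eval z) (rescaleF N fun z => Q.eval z))
      Filter.atTop (nhds (innerF (fun z => P.eval z) (fun z => Q.eval z))) := by
  have hJ := J_tendsto M P Q hP hQ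
  have hconst : Tendsto (fun N : ℕ => ((((N : ℝ) + 1) / N : ℝ) : ℂ)) atTop (nhds 1) := by
    have hr : Tendsto (fun N : ℕ => ((N : ℝ) + 1) / N) atTop (nhds 1) := by
      have h0 : Tendsto (fun N : ℕ => 1 + 1 / (N : ℝ)) atTop (nhds 1) := by
        have h00 := tendsto_const_div_atTop_nhds_zero_nat (1 : ℝ)
        simpa using (tendsto_const_nhds.add h00)
      refine h0.congr' ?_
      filter_upwards [Filter.eventually_ge_atTop 1] with N hN
      have hN0 : (N : ℝ) ≠ 0 := by
        have : (1 : ℝ) ≤ N := by exact_mod_cast hN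
        linarith
      field_simp
    have h2 := (Complex.continuous_ofReal.tendsto 1).comp hr
    rw [Complex.ofReal_one] at h2
    exact h2.congr fun N => rfl
  have hmul := hconst.mul hJ
  rw [one_mul] at hmul
  have heq : innerF (fun z => P.eval z) (fun z => Q.eval z)
      = ∫ w : ℂ, P.eval w * (starRingEnd ℂ) (Q.eval w) *
          ((Real.exp (-(Real.pi * ‖w‖ ^ 2)) : ℝ) : ℂ) := by
    unfold innerF
    simp_rw [neg_mul]
  rw [← heq] at hmul
  refine hmul.congr' ?_
  filter_upwards [Filter.eventually_ge_atTop 1] with N hN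
  exact (innerN_eq N hN _ _).symm

/-- **Convergence of the inner products to the Fock one** (Lemma 4.1).
For polynomials `P, Q` of degree at most `M`, `⟨P^N,Q^N⟩_N → ⟨P,Q⟩_{𝔽²}` as `N → ∞`;
in particular `‖P^N‖_N → ‖P‖_{𝔽²}`. -/
theorem inner_limit (M : ℕ) (P Q : Polynomial ℂ)
    (hP : P.natDegree ≤ M) (hQ : Q.natDegree ≤ M) :
    Filter.Tendsto (fun N : ℕ =>
        innerN N (rescaleF N fun z => P.eval z) (rescaleF N fun z => Q.eval z))
      Filter.atTop (nhds (innerF (fun z => P.eval z) (fun z => Q.eval z))) ∧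
    Filter.Tendsto (fun N : ℕ => Real.sqrt (normNsq N (rescaleF N fun z => P.eval z)))
      Filter.atTop (nhds (Real.sqrt (normFsq fun z => P.eval z))) := by
  refine ⟨inner_conv M P Q hP hQ, ?_⟩
  have h2 := inner_conv M P P hP hP
  have h3 : Filter.Tendsto (fun N : ℕ =>
      (innerN N (rescaleF N fun z => P.eval z) (rescaleF N fun z => P.eval z)).re)
      Filter.atTop (nhds ((innerF (fun z => P.eval z) (fun z => P.eval z)).re)) :=
    (Complex.continuous_re.tendsto _).comp h2
  have h4 : ∀ N : ℕ, normNsq N (rescaleF N fun z => P.eval z)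
      = (innerN N (rescaleF N fun z => P.eval z) (rescaleF N fun z => P.eval z)).re := by
    intro N
    rw [← normNsq_eq, Complex.ofReal_re]
  have h5 : normFsq (fun z => P.eval z)
      = (innerF (fun z => P.eval z) (fun z => P.eval z)).re := by
    rw [← normFsq_eq, Complex.ofReal_re]
  have h6 : Filter.Tendsto (fun N : ℕ => normNsq N (rescaleF N fun z => P.eval z))
      Filter.atTop (nhds (normFsq fun z => P.eval z)) := by
    rw [h5]
    exact h3.congr fun N => (h4 N).symm
  exact (Real.continuous_sqrt.tendsto _).comp h6

end
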